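/- arXiv:2210.12888 — 2 statements merged into one kernel-verified Lean document; each statement's English description precedes it below -/
import Mathlib

section
/- With P_k, Q_k defined by P₀ = 0, Q₀ = 1, P_{k+1} = ρ²(2Q_k − P_k), Q_{k+1} = (4ρ−1)Q_k − 2ρP_k, for every k ≥ 1 the polynomial P_k − Q_k has degree 2k, constant coefficient ±1, leading coefficient ±2, and all coefficients other than the constant coefficient even; consequently P_k − Q_k is irreducible over ℚ (its reciprocal polynomial is Eisenstein at the prime 2). -/
open Polynomial

/-- The recursively defined pair of polynomials `(P_k, Q_k)` with `P₀ = 0`, `Q₀ = 1`,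
`P_{k+1} = ρ²(2Q_k − P_k)`, `Q_{k+1} = (4ρ−1)Q_k − 2ρP_k`. -/
noncomputable def PQ : ℕ → Polynomial ℤ × Polynomial ℤ
  | 0 => (0, 1)
  | k + 1 =>
      (X ^ 2 * (2 * (PQ k).2 - (PQ k).1),
       (4 * X - 1) * (PQ k).2 - 2 * X * (PQ k).1)

lemma PQ_mod2 (k : ℕ) : ((PQ k).1).map (Int.castRingHom (ZMod 2)) = 0 ∧
    ((PQ k).2).map (Int.castRingHom (ZMod 2)) = 1 := by
  have h2 : (2 : (ZMod 2)[X]) = 0 := by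
    rw [← map_ofNat (C : ZMod 2 →+* (ZMod 2)[X]) 2, show (2 : ZMod 2) = 0 by decide, map_zero]
  induction k with
  | zero => simp [PQ]
  | succ k ih =>
    obtain ⟨h1, hq⟩ := ih
    refine ⟨?_, ?_⟩
    · simp [PQ, Polynomial.map_sub, Polynomial.map_mul, Polynomial.map_pow,
        Polynomial.map_ofNat, h1, hq]
      linear_combination h2
    · simp [PQ, Polynomial.map_sub, Polynomial.map_mul, Polynomial.map_pow,
        Polynomial.map_ofNat, h1, hq]
      linear_combination (2*X - 1 : (ZMod 2)[X]) * h2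

lemma PQ_coeff0 (k : ℕ) : (PQ k).2.coeff 0 = (-1) ^ k ∧ (1 ≤ k → (PQ k).1.coeff 0 = 0) := by
  induction k with
  | zero => simp [PQ]
  | succ k ih =>
    refine ⟨?_, fun _ => ?_⟩
    · simp [PQ, coeff_sub, mul_coeff_zero, ih.1, pow_succ]
    · simp [PQ, mul_coeff_zero, coeff_X_pow]

lemma PQ_deg (k : ℕ) (hk : 1 ≤ k) :
    (PQ k).1.coeff (2 * k) = 2 * (-1) ^ (k + 1) ∧ (PQ k).1.natDegree ≤ 2 * k ∧
      (PQ k).2.natDegree < 2 * k := by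
  induction k with
  | zero => omega
  | succ k ih =>
    rcases Nat.eq_zero_or_pos k with rfl | hk1
    · refine ⟨by simp [PQ], ?_, ?_⟩
      · show (X ^ 2 * (2 * 1 - 0) : ℤ[X]).natDegree ≤ 2 * 1
        simp
      · show ((4 * X - 1) * 1 - 2 * X * 0 : ℤ[X]).natDegree < 2 * 1
        have h41 : ((4 * X - 1 : ℤ[X])).natDegree ≤ 1 := by compute_degree
        simp only [mul_one, mul_zero, sub_zero]
        omega
    · obtain ⟨hc, hP, hQ⟩ := ih hk1
      have key : (PQ (k+1)).1.coeff (2*(k+1))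
          = 2 * (PQ k).2.coeff (2*k) - (PQ k).1.coeff (2*k) := by
        have := coeff_X_pow_mul (2 * (PQ k).2 - (PQ k).1) 2 (2*k)
        rw [show 2*k+2 = 2*(k+1) by ring] at this
        simpa [PQ] using this
      refine ⟨?_, ?_, ?_⟩
      · rw [key, coeff_eq_zero_of_natDegree_lt hQ, hc]
        ring
      · show ((X:ℤ[X]) ^ 2 * (2 * (PQ k).2 - (PQ k).1)).natDegree ≤ 2 * (k+1)
        have h1 : (2 * (PQ k).2).natDegree ≤ (PQ k).2.natDegree :=
          natDegree_mul_le.trans (by simp)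
        have h2 := natDegree_sub_le (2 * (PQ k).2) (PQ k).1
        calc ((X:ℤ[X]) ^ 2 * (2 * (PQ k).2 - (PQ k).1)).natDegree
            ≤ (X^2 : ℤ[X]).natDegree + (2 * (PQ k).2 - (PQ k).1).natDegree := natDegree_mul_le
          _ ≤ 2 * (k+1) := by
              rw [natDegree_X_pow]
              have h4 : (2 * (PQ k).2).natDegree ⊔ (PQ k).1.natDegree ≤ 2 * k :=
                max_le (by omega) hP
              omega
      · show ((4 * X - 1) * (PQ k).2 - 2 * X * (PQ k).1).natDegree < 2 * (k+1)
        have h41 : ((4 * X - 1 : ℤ[X])).natDegree ≤ 1 := by compute_degree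
        have h2X : ((2 * X : ℤ[X])).natDegree ≤ 1 := by compute_degree
        have b1 : ((4 * X - 1) * (PQ k).2).natDegree ≤ 1 + (PQ k).2.natDegree :=
          natDegree_mul_le.trans (by omega)
        have b2 : ((2 * X : ℤ[X]) * (PQ k).1).natDegree ≤ 1 + (PQ k).1.natDegree :=
          natDegree_mul_le.trans (by omega)
        have := natDegree_sub_le ((4 * X - 1) * (PQ k).2) (2 * X * (PQ k).1)
        have h4 : ((4 * X - 1) * (PQ k).2).natDegree ⊔ (2 * X * (PQ k).1).natDegree
            ≤ 1 + 2 * k := max_le (by omega) (by omega)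
        omega

lemma irreducible_of_reverse {K : Type*} [Field K] {g : K[X]}
    (h0 : g.coeff 0 ≠ 0) (h : Irreducible g.reverse) : Irreducible g := by
  have hunit : ∀ a : K[X], a.coeff 0 ≠ 0 → IsUnit a.reverse → IsUnit a := by
    intro a ha hu
    have ha0 : a ≠ 0 := fun h' => ha (by simp [h'])
    have h1 : a.reverse.natDegree = 0 := natDegree_eq_zero_of_isUnit hu
    have h2 : a.natTrailingDegree = 0 := natTrailingDegree_eq_zero.mpr (Or.inr ha)
    have h3 : a.natDegree = 0 := by
      have := a.natDegree_eq_reverse_natDegree_add_natTrailingDegree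
      omega
    rw [eq_C_of_natDegree_eq_zero h3]
    exact isUnit_C.mpr (isUnit_iff_ne_zero.mpr ha)
  constructor
  · intro hu
    have h3 : g.natDegree = 0 := natDegree_eq_zero_of_isUnit hu
    have hg : g = C (g.coeff 0) := eq_C_of_natDegree_eq_zero h3
    have : g.reverse = g := by rw [hg]; simp [reverse]
    rw [← this] at hu
    exact h.not_isUnit hu
  · intro a b hab
    have hco : a.coeff 0 ≠ 0 ∧ b.coeff 0 ≠ 0 := by
      rw [hab, mul_coeff_zero] at h0
      exact ⟨left_ne_zero_of_mul h0, right_ne_zero_of_mul h0⟩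
    have := h.isUnit_or_isUnit (by rw [hab, reverse_mul_of_domain])
    exact this.imp (hunit a hco.1) (hunit b hco.2)

/-- For every `k ≥ 1`, `P_k − Q_k` has degree `2k`, constant coefficient `±1`, leading
coefficient `±2`, all non-constant coefficients even, and is irreducible over `ℚ`. -/
theorem stmt_11 (k : ℕ) (hk : 1 ≤ k) :
    ((PQ k).1 - (PQ k).2).natDegree = 2 * k ∧
    (((PQ k).1 - (PQ k).2).coeff 0 = 1 ∨ ((PQ k).1 - (PQ k).2).coeff 0 = -1) ∧
    (((PQ k).1 - (PQ k).2).leadingCoeff = 2 ∨ ((PQ k).1 - (PQ k).2).leadingCoeff = -2) ∧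
    (∀ n, n ≠ 0 → (2 : ℤ) ∣ ((PQ k).1 - (PQ k).2).coeff n) ∧
    Irreducible (((PQ k).1 - (PQ k).2).map (Int.castRingHom ℚ)) := by
  obtain ⟨hc, hP, hQ⟩ := PQ_deg k hk
  obtain ⟨hq0, hp0⟩ := PQ_coeff0 k
  set D := (PQ k).1 - (PQ k).2 with hD
  have hD2k : D.coeff (2 * k) = 2 * (-1) ^ (k + 1) := by
    rw [hD, coeff_sub, coeff_eq_zero_of_natDegree_lt hQ, hc, sub_zero]
  have hDdegle : D.natDegree ≤ 2 * k := (natDegree_sub_le _ _).trans (max_le hP hQ.le)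
  have hD2k_ne : D.coeff (2 * k) ≠ 0 := by
    rw [hD2k]
    exact mul_ne_zero two_ne_zero (pow_ne_zero _ (by norm_num))
  have hdeg : D.natDegree = 2 * k := natDegree_eq_of_le_of_coeff_ne_zero hDdegle hD2k_ne
  have hlead : D.leadingCoeff = 2 * (-1) ^ (k + 1) := by rw [leadingCoeff, hdeg, hD2k]
  have hc0 : D.coeff 0 = -(-1) ^ k := by rw [hD, coeff_sub, hp0 hk, hq0, zero_sub]
  have hc0' : D.coeff 0 = 1 ∨ D.coeff 0 = -1 := by
    rcases Nat.even_or_odd k with h | h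
    · right; rw [hc0, h.neg_one_pow]
    · left; rw [hc0, h.neg_one_pow]; ring
  have hlead' : D.leadingCoeff = 2 ∨ D.leadingCoeff = -2 := by
    rcases Nat.even_or_odd (k + 1) with h | h
    · left; rw [hlead, h.neg_one_pow]; ring
    · right; rw [hlead, h.neg_one_pow]; ring
  have hdvd : ∀ n, n ≠ 0 → (2 : ℤ) ∣ D.coeff n := by
    intro n hn
    obtain ⟨m1, m2⟩ := PQ_mod2 k
    have h1 : (D.map (Int.castRingHom (ZMod 2))).coeff n = 0 := by
      rw [hD, Polynomial.map_sub, m1, m2]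
      simp [coeff_one, hn]
    rw [coeff_map] at h1
    exact_mod_cast (ZMod.intCast_zmod_eq_zero_iff_dvd _ 2).mp h1
  have hc0ne : D.coeff 0 ≠ 0 := by rcases hc0' with h | h <;> rw [h] <;> norm_num
  have hDne : D ≠ 0 := fun h => hc0ne (by rw [h]; simp)
  have hT : D.natTrailingDegree = 0 := natTrailingDegree_eq_zero.mpr (Or.inr hc0ne)
  -- the reverse polynomial
  set f := D.reverse with hf
  have hfdeg : f.natDegree = 2 * k := by rw [hf, reverse_natDegree, hT, hdeg, Nat.sub_zero]
  have hfne : f ≠ 0 := fun h => hDne (reverse_eq_zero.mp h)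
  have hflead : f.leadingCoeff = D.coeff 0 := by
    rw [hf, reverse_leadingCoeff, trailingCoeff, hT]
  have hfcoeff : ∀ n, n ≤ 2 * k → f.coeff n = D.coeff (2 * k - n) := by
    intro n hn
    rw [hf, coeff_reverse, hdeg, revAt_le hn]
  have two_prime : Prime (2 : ℤ) := Int.prime_two
  have hprim : f.IsPrimitive := by
    intro r hr
    have hdr : r ∣ f.coeff (2 * k) := (C_dvd_iff_dvd_coeff r f).mp hr (2 * k)
    rw [← hfdeg, ← leadingCoeff, hflead] at hdr
    rcases hc0' with h | h <;> rw [h] at hdr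
    · exact isUnit_of_dvd_one hdr
    · exact isUnit_of_dvd_unit hdr (by norm_num)
  have hirr : Irreducible f := by
    apply irreducible_of_eisenstein_criterion
      (P := Ideal.span ({2} : Set ℤ))
      ((Ideal.span_singleton_prime (by norm_num)).mpr two_prime)
    · rw [Ideal.mem_span_singleton, hflead]
      rcases hc0' with h | h <;> rw [h] <;> decide
    · intro n hn
      rw [degree_eq_natDegree hfne, Nat.cast_lt, hfdeg] at hn
      rw [Ideal.mem_span_singleton, hfcoeff n hn.le]
      exact hdvd _ (by omega)
    · rw [degree_eq_natDegree hfne]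
      exact_mod_cast (by omega : 0 < f.natDegree)
    · rw [Ideal.span_singleton_pow, Ideal.mem_span_singleton]
      rw [show f.coeff 0 = D.leadingCoeff by rw [hf, coeff_zero_reverse]]
      rcases hlead' with h | h <;> rw [h] <;> decide
    · exact hprim
  have hirrQ : Irreducible (f.map (Int.castRingHom ℚ)) :=
    (IsPrimitive.Int.irreducible_iff_irreducible_map_cast hprim).mp hirr
  have hmapdeg : (D.map (Int.castRingHom ℚ)).natDegree = D.natDegree :=
    natDegree_map_eq_of_injective (by exact Int.cast_injective) D
  have hcomm : f.map (Int.castRingHom ℚ) = (D.map (Int.castRingHom ℚ)).reverse := by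
    rw [hf, reverse, reverse, hmapdeg, reflect_map]
  refine ⟨hdeg, hc0', hlead', hdvd, ?_⟩
  apply irreducible_of_reverse (g := D.map (Int.castRingHom ℚ))
  · rw [coeff_map]
    exact fun h => hc0ne (Int.cast_injective (α := ℚ) (by simpa using h))
  · rw [← hcomm]; exact hirrQ
end

section
/- Let U = [[0,0,1],[0,0,0],[1,0,0]] and D = [[0,2,0],[0,0,2],[0,0,0]]. Then the minimum over y in the 2-dimensional simplex Δ₃ of (1 − yᵀUy)/(yᵀDy) (interpreted as +∞ when yᵀDy = 0) equals 1 + 1/√2, attained at y* = (1 − 1/√2, √2 − 1, 1 − 1/√2). -/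
open Matrix

/-- For `U = [[0,0,1],[0,0,0],[1,0,0]]` and `D = [[0,2,0],[0,0,2],[0,0,0]]`, the minimum
over the simplex `Δ₃` of `(1 − yᵀUy)/(yᵀDy)` (interpreted as `+∞` when `yᵀDy = 0`) is
`1 + 1/√2`, attained at `y* = (1 − 1/√2, √2 − 1, 1 − 1/√2)`. -/
theorem stmt_12 :
    let U : Matrix (Fin 3) (Fin 3) ℝ := !![0, 0, 1; 0, 0, 0; 1, 0, 0]
    let D : Matrix (Fin 3) (Fin 3) ℝ := !![0, 2, 0; 0, 0, 2; 0, 0, 0]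
    let y : Fin 3 → ℝ := ![1 - 1 / Real.sqrt 2, Real.sqrt 2 - 1, 1 - 1 / Real.sqrt 2]
    y ∈ stdSimplex ℝ (Fin 3) ∧
    y ⬝ᵥ (D *ᵥ y) ≠ 0 ∧
    (1 - y ⬝ᵥ (U *ᵥ y)) / (y ⬝ᵥ (D *ᵥ y)) = 1 + 1 / Real.sqrt 2 ∧
    ∀ z ∈ stdSimplex ℝ (Fin 3), z ⬝ᵥ (D *ᵥ z) ≠ 0 →
      1 + 1 / Real.sqrt 2 ≤ (1 - z ⬝ᵥ (U *ᵥ z)) / (z ⬝ᵥ (D *ᵥ z)) := by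
  intro U D y
  have hs2 : (Real.sqrt 2) ^ 2 = 2 := Real.sq_sqrt (by norm_num)
  have hs1 : 1 < Real.sqrt 2 := by
    nlinarith [Real.sqrt_nonneg 2]
  have hspos : (0:ℝ) < Real.sqrt 2 := by linarith
  set s := Real.sqrt 2 with hs
  have hinv : s⁻¹ < 1 := inv_lt_one_of_one_lt₀ hs1
  have hinvpos : (0:ℝ) < s⁻¹ := inv_pos.mpr hspos
  have hsi : s * s⁻¹ = 1 := mul_inv_cancel₀ (ne_of_gt hspos)
  refine ⟨?_, ?_, ?_, ?_⟩
  · constructor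
    · intro i
      fin_cases i <;> simp [y, one_div] <;> linarith
    · simp [y, Fin.sum_univ_three, one_div]
      nlinarith
  · show y ⬝ᵥ (D *ᵥ y) ≠ 0
    simp [y, D, dotProduct, mulVec, Fin.sum_univ_three, Matrix.vecHead, Matrix.vecTail, one_div]
    intro h
    nlinarith
  · show (1 - y ⬝ᵥ (U *ᵥ y)) / (y ⬝ᵥ (D *ᵥ y)) = 1 + 1 / s
    simp [y, U, D, dotProduct, mulVec, Fin.sum_univ_three, Matrix.vecHead, Matrix.vecTail, one_div]
    rw [div_eq_iff]
    · nlinarith [sq_nonneg (s⁻¹), hsi, hs2]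
    · nlinarith
  · intro z hz hD
    obtain ⟨hnn, hsum⟩ := hz
    have ha := hnn 0; have hb := hnn 1; have hc := hnn 2
    have hsum' : z 0 + z 1 + z 2 = 1 := by
      simpa [Fin.sum_univ_three] using hsum
    have hDval : z ⬝ᵥ (D *ᵥ z) = 2 * z 0 * z 1 + 2 * z 1 * z 2 := by
      simp [D, dotProduct, mulVec, Fin.sum_univ_three, Matrix.vecHead, Matrix.vecTail]; ring
    have hUval : z ⬝ᵥ (U *ᵥ z) = 2 * z 0 * z 2 := by
      simp [U, dotProduct, mulVec, Fin.sum_univ_three, Matrix.vecHead, Matrix.vecTail]; ring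
    rw [hDval, hUval]
    have hDpos : 0 < 2 * z 0 * z 1 + 2 * z 1 * z 2 := by
      rcases lt_or_eq_of_le (by nlinarith : (0:ℝ) ≤ 2 * z 0 * z 1 + 2 * z 1 * z 2) with h | h
      · exact h
      · exact absurd (hDval.trans h.symm) hD
    rw [le_div_iff₀ hDpos]
    have key2 : (3 + 2*s) * (z 0 + z 2)^2 - (4 + 2*s) * (z 0 + z 2) + 2 ≥ 0 := by
      nlinarith [sq_nonneg ((3 + 2*s) * (z 0 + z 2) - (2 + s)), hs2, hspos]
    have hsq : (z 0 - z 2)^2 ≥ 0 := sq_nonneg _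
    have h1s : 1/s = s/2 := by
      rw [div_eq_div_iff (ne_of_gt hspos) (by norm_num : (2:ℝ) ≠ 0)]; nlinarith
    rw [h1s]
    have hb' : z 1 = 1 - z 0 - z 2 := by linarith
    rw [hb']
    nlinarith [hsq, key2]
end
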